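/- Let R be a subring of ℂ closed under complex conjugation and let F = {a/b : a, b ∈ R, b ≠ 0}, a subfield of ℂ. Let α ∈ ℂ be algebraic over F whose minimal polynomial p over F has all of its coefficients in R and has degree d, and let R[α] denote the smallest subring of ℂ containing R and α; assume conj α ∈ R[α] (so R[α] is closed under complex conjugation). If Φ is a pre-embedding of dimension k from R[α] to R, then Λ := Φ₀(α) is normal (Λ * Λᴴ = Λᴴ * Λ) and there exists a positive integer c such that the characteristic polynomial of Λ equals p^c (viewing p as a polynomial over ℂ); that is, Λ is a normal pseudo-companion matrix for p. -/

import Mathlib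

open Matrix Polynomial

/-- A *pre-embedding of dimension `k` from `S` to `R`* (for `S R : Subring ℂ`, each closed
under complex conjugation): a family `toFun` assigning to every square complex matrix indexed
by a finite type `ι` (with all entries in `S`) a complex matrix indexed by `ι × Fin k` with all
entries in `R`, together with a fixed nonzero orthogonal projector `proj` on `Fin k` (the
catalytic projector), satisfying multiplicativity, additivity, unitality, compatibility with
conjugate transpose, compatibility with Kronecker products by matrices over `R ∩ S`, and the
catalytic condition `Φ(A) * (1 ⊗ Π) = A ⊗ Π`. -/
structure PreEmbedding (k : ℕ) (S R : Subring ℂ) : Type 1 where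
  toFun : ∀ (ι : Type) [Fintype ι] [DecidableEq ι],
    Matrix ι ι ℂ → Matrix (ι × Fin k) (ι × Fin k) ℂ
  proj : Matrix (Fin k) (Fin k) ℂ
  hS_conj : ∀ z ∈ S, (starRingEnd ℂ) z ∈ S
  hR_conj : ∀ z ∈ R, (starRingEnd ℂ) z ∈ R
  proj_ne_zero : proj ≠ 0
  proj_herm : proj.conjTranspose = proj
  proj_idem : proj * proj = proj
  mem_R : ∀ (ι : Type) [Fintype ι] [DecidableEq ι] (A : Matrix ι ι ℂ),
    (∀ i j, A i j ∈ S) → ∀ p q, toFun ι A p q ∈ R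
  map_mul : ∀ (ι : Type) [Fintype ι] [DecidableEq ι] (A B : Matrix ι ι ℂ),
    (∀ i j, A i j ∈ S) → (∀ i j, B i j ∈ S) → toFun ι (A * B) = toFun ι A * toFun ι B
  map_add : ∀ (ι : Type) [Fintype ι] [DecidableEq ι] (A B : Matrix ι ι ℂ),
    (∀ i j, A i j ∈ S) → (∀ i j, B i j ∈ S) → toFun ι (A + B) = toFun ι A + toFun ι B
  map_one : ∀ (ι : Type) [Fintype ι] [DecidableEq ι], toFun ι (1 : Matrix ι ι ℂ) = 1
  map_conjTranspose : ∀ (ι : Type) [Fintype ι] [DecidableEq ι] (A : Matrix ι ι ℂ),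
    (∀ i j, A i j ∈ S) → toFun ι Aᴴ = (toFun ι A)ᴴ
  map_kronecker : ∀ (ι κ : Type) [Fintype ι] [DecidableEq ι] [Fintype κ] [DecidableEq κ]
    (C : Matrix ι ι ℂ) (A : Matrix κ κ ℂ),
    (∀ i j, C i j ∈ R) → (∀ i j, C i j ∈ S) → (∀ i j, A i j ∈ S) →
    toFun (ι × κ) (Matrix.kroneckerMap (· * ·) C A) =
      Matrix.reindex (Equiv.prodAssoc ι κ (Fin k)).symm (Equiv.prodAssoc ι κ (Fin k)).symm
        (Matrix.kroneckerMap (· * ·) C (toFun κ A))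
  catalytic : ∀ (ι : Type) [Fintype ι] [DecidableEq ι] (A : Matrix ι ι ℂ),
    (∀ i j, A i j ∈ S) →
    toFun ι A * Matrix.kroneckerMap (· * ·) (1 : Matrix ι ι ℂ) proj =
      Matrix.kroneckerMap (· * ·) A proj

/-- `Φ₀ s`: the pre-embedding applied to the `1 × 1` matrix with entry `s`, reindexed to a
matrix indexed by `Fin k`. -/
def PreEmbedding.apply0 {k : ℕ} {S R : Subring ℂ} (E : PreEmbedding k S R) (s : ℂ) :
    Matrix (Fin k) (Fin k) ℂ :=
  Matrix.reindex (Equiv.punitProd (Fin k)) (Equiv.punitProd (Fin k))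
    (E.toFun Unit (Matrix.of fun _ _ => s))


noncomputable def Subring.fracSubfield (R : Subring ℂ) : Subfield ℂ where
  carrier := {z : ℂ | ∃ a ∈ R, ∃ b ∈ R, b ≠ 0 ∧ z = a / b}
  zero_mem' := ⟨0, R.zero_mem, 1, R.one_mem, one_ne_zero, by simp⟩
  one_mem' := ⟨1, R.one_mem, 1, R.one_mem, one_ne_zero, by simp⟩
  add_mem' := by
    rintro x y ⟨a, ha, b, hb, hb0, rfl⟩ ⟨c, hc, e, he, he0, rfl⟩
    exact ⟨a * e + b * c, R.add_mem (R.mul_mem ha he) (R.mul_mem hb hc), b * e,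
      R.mul_mem hb he, mul_ne_zero hb0 he0, by field_simp⟩
  mul_mem' := by
    rintro x y ⟨a, ha, b, hb, hb0, rfl⟩ ⟨c, hc, e, he, he0, rfl⟩
    exact ⟨a * c, R.mul_mem ha hc, b * e, R.mul_mem hb he, mul_ne_zero hb0 he0,
      by rw [div_mul_div_comm]⟩
  neg_mem' := by
    rintro x ⟨a, ha, b, hb, hb0, rfl⟩
    exact ⟨-a, R.neg_mem ha, b, hb, hb0, by rw [neg_div]⟩
  inv_mem' := by
    rintro x ⟨a, ha, b, hb, hb0, rfl⟩
    rcases eq_or_ne a 0 with rfl | ha0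
    · exact ⟨0, R.zero_mem, 1, R.one_mem, one_ne_zero, by simp⟩
    · exact ⟨b, hb, a, ha, ha0, by rw [inv_div]⟩

theorem Subring.mem_fracSubfield_of_mem (R : Subring ℂ) {z : ℂ} (hz : z ∈ R) :
    z ∈ R.fracSubfield :=
  ⟨z, hz, 1, R.one_mem, one_ne_zero, (div_one z).symm⟩

namespace PreEmbedding

variable {k : ℕ} {S R : Subring ℂ} (E : PreEmbedding k S R)

theorem of_mul (s t : ℂ) :
    (Matrix.of fun _ _ => s * t : Matrix Unit Unit ℂ) =
      (Matrix.of fun _ _ => s) * (Matrix.of fun _ _ => t) := by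
  ext i j
  simp [Matrix.mul_apply]

theorem apply0_mul {s t : ℂ} (hs : s ∈ S) (ht : t ∈ S) :
    E.apply0 (s * t) = E.apply0 s * E.apply0 t := by
  unfold apply0
  rw [of_mul, E.map_mul Unit (Matrix.of fun _ _ => s) (Matrix.of fun _ _ => t) (fun _ _ => hs) (fun _ _ => ht)]
  simp [Matrix.reindex_apply, Matrix.submatrix_mul_equiv]

theorem apply0_add {s t : ℂ} (hs : s ∈ S) (ht : t ∈ S) :
    E.apply0 (s + t) = E.apply0 s + E.apply0 t := by
  unfold apply0
  rw [show (Matrix.of fun _ _ => s + t : Matrix Unit Unit ℂ)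
      = (Matrix.of fun _ _ => s) + (Matrix.of fun _ _ => t) from rfl,
    E.map_add Unit (Matrix.of fun _ _ => s) (Matrix.of fun _ _ => t) (fun _ _ => hs) (fun _ _ => ht)]
  ext i j
  simp

theorem apply0_one : E.apply0 1 = 1 := by
  unfold apply0
  rw [show (Matrix.of fun _ _ => (1 : ℂ) : Matrix Unit Unit ℂ) = 1 by
      ext i j; simp [Matrix.one_apply], E.map_one Unit]
  simp

theorem apply0_zero : E.apply0 0 = 0 := by
  have h := E.apply0_add S.zero_mem S.zero_mem
  rw [add_zero] at h
  exact right_eq_add.mp h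

theorem apply0_pow {s : ℂ} (hs : s ∈ S) (n : ℕ) : E.apply0 (s ^ n) = E.apply0 s ^ n := by
  induction n with
  | zero => simpa using E.apply0_one
  | succ n ih =>
    rw [pow_succ, E.apply0_mul (S.pow_mem hs n) hs, ih, pow_succ]

theorem apply0_conjTranspose {s : ℂ} (hs : s ∈ S) :
    E.apply0 ((starRingEnd ℂ) s) = (E.apply0 s)ᴴ := by
  unfold apply0
  rw [show (Matrix.of fun _ _ => (starRingEnd ℂ) s : Matrix Unit Unit ℂ)
      = (Matrix.of fun _ _ => s : Matrix Unit Unit ℂ)ᴴ by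
      ext i j; simp [Matrix.conjTranspose_apply],
    E.map_conjTranspose Unit (Matrix.of fun _ _ => s) (fun _ _ => hs)]
  simp [Matrix.reindex_apply, Matrix.conjTranspose_submatrix]

theorem apply0_smul {c s : ℂ} (hc : c ∈ R) (hcS : c ∈ S) (hs : s ∈ S) :
    E.apply0 (c * s) = c • E.apply0 s := by
  have h1 := E.map_kronecker Unit Unit (Matrix.of fun _ _ => c) (Matrix.of fun _ _ => s)
    (fun _ _ => hc) (fun _ _ => hcS) (fun _ _ => hs)
  have h2 := E.map_kronecker Unit Unit (Matrix.of fun _ _ => (1 : ℂ))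
    (Matrix.of fun _ _ => c * s)
    (fun _ _ => R.one_mem) (fun _ _ => S.one_mem) (fun _ _ => S.mul_mem hcS hs)
  have hA : Matrix.kroneckerMap (· * ·) (Matrix.of fun _ _ => c : Matrix Unit Unit ℂ)
      (Matrix.of fun _ _ => s : Matrix Unit Unit ℂ)
      = Matrix.kroneckerMap (· * ·) (Matrix.of fun _ _ => (1 : ℂ) : Matrix Unit Unit ℂ)
      (Matrix.of fun _ _ => c * s : Matrix Unit Unit ℂ) := by
    ext i j
    simp [Matrix.kroneckerMap_apply]
  rw [hA, h2] at h1
  have h3 := (Matrix.reindex (Equiv.prodAssoc Unit Unit (Fin k)).symm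
      (Equiv.prodAssoc Unit Unit (Fin k)).symm).injective h1
  unfold apply0
  ext i j
  have h4 := congrFun (congrFun h3 ((), ((), i))) ((), ((), j))
  simp only [Matrix.kroneckerMap_apply, Matrix.of_apply] at h4
  rw [one_mul] at h4
  simp [Matrix.reindex_apply, Matrix.submatrix_apply, h4]

end PreEmbedding

/-- Theorem `standard`, necessity. If `Φ` is a pre-embedding of dimension
`k` from `R[α]` to `R`, where the minimal polynomial `p` of `α` over `F = Frac(R)` has all
coefficients in `R`, then `Λ = Φ₀(α)` is a normal pseudo-companion matrix for `p`: `Λ` is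
normal and its characteristic polynomial is `p ^ c` for some positive integer `c`. -/
theorem preEmbedding_apply0_isPseudoCompanion (k : ℕ) (R : Subring ℂ)
    (hR : ∀ z ∈ R, (starRingEnd ℂ) z ∈ R)
    (F : Set ℂ) (hF : F = {z : ℂ | ∃ a ∈ R, ∃ b ∈ R, b ≠ 0 ∧ z = a / b})
    (α : ℂ)
    (p : Polynomial ℂ) (d : ℕ)
    (hp_monic : p.Monic) (hp_coeffF : ∀ m, p.coeff m ∈ F) (hp_coeffR : ∀ m, p.coeff m ∈ R)
    (hp_root : p.eval α = 0) (hp_deg : p.natDegree = d)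
    (hp_min : ∀ q : Polynomial ℂ, (∀ m, q.coeff m ∈ F) → q ≠ 0 → q.eval α = 0 →
      p.degree ≤ q.degree)
    (hconjα : (starRingEnd ℂ) α ∈ Subring.closure (insert α (R : Set ℂ)))
    (E : PreEmbedding k (Subring.closure (insert α (R : Set ℂ))) R) :
    E.apply0 α * (E.apply0 α)ᴴ = (E.apply0 α)ᴴ * E.apply0 α ∧
    ∃ c : ℕ, 0 < c ∧ (E.apply0 α).charpoly = p ^ c := by
  classical
  have hαS : α ∈ Subring.closure (insert α (R : Set ℂ)) :=
    Subring.subset_closure (Set.mem_insert _ _)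
  have hRS : ∀ r : ℂ, r ∈ R → r ∈ Subring.closure (insert α (R : Set ℂ)) := fun r hr =>
    Subring.subset_closure (Set.mem_insert_of_mem _ hr)
  set Λ : Matrix (Fin k) (Fin k) ℂ := E.apply0 α with hΛdef
  have hS : Subring.closure (insert α (R : Set ℂ)) = Subring.closure (insert α (R : Set ℂ)) := rfl
  constructor
  · rw [← E.apply0_conjTranspose hαS, ← E.apply0_mul hαS hconjα, ← E.apply0_mul hconjα hαS,
      mul_comm]
  have hk : 0 < k := by
    rcases Nat.eq_zero_or_pos k with hk0 | hk
    · exfalso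
      apply E.proj_ne_zero
      subst hk0
      ext i j
      exact i.elim0
    · exact hk
  -- `p(Λ) = 0`
  have haeval : (Polynomial.aeval Λ) p = 0 := by
    have hterm : ∀ i : ℕ, p.coeff i * α ^ i ∈ Subring.closure (insert α (R : Set ℂ)) := fun i =>
      Subring.mul_mem _ (hRS _ (hp_coeffR i)) (Subring.pow_mem _ hαS i)
    have hsum : ∀ n : ℕ,
        E.apply0 (∑ i ∈ Finset.range n, p.coeff i * α ^ i)
          = ∑ i ∈ Finset.range n, p.coeff i • Λ ^ i := by
      intro n
      induction n with
      | zero => simpa using E.apply0_zero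
      | succ n ih =>
        rw [Finset.sum_range_succ,
          E.apply0_add (Subring.sum_mem _ fun i _ => hterm i) (hterm n), ih,
          E.apply0_smul (hp_coeffR n) (hRS _ (hp_coeffR n)) (Subring.pow_mem _ hαS n),
          E.apply0_pow hαS n, Finset.sum_range_succ]
    have h0 : E.apply0 (∑ i ∈ Finset.range (p.natDegree + 1), p.coeff i * α ^ i) = 0 := by
      rw [← Polynomial.eval_eq_sum_range, hp_root, E.apply0_zero]
    rw [hsum] at h0
    rw [Polynomial.aeval_eq_sum_range]
    exact h0
  -- every root of the characteristic polynomial is a root of `p`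
  have hroot_imp : ∀ z : ℂ, Λ.charpoly.IsRoot z → p.IsRoot z := by
    intro z hz
    have hdet : (z • (1 : Matrix (Fin k) (Fin k) ℂ) - Λ).det = 0 := by
      have hmap : (Matrix.charmatrix Λ).map (Polynomial.evalRingHom z)
          = z • (1 : Matrix (Fin k) (Fin k) ℂ) - Λ := by
        ext i j
        by_cases hij : i = j
        · subst hij
          simp [Matrix.charmatrix_apply_eq]
        · simp [Matrix.charmatrix_apply_ne _ _ _ hij, Matrix.one_apply_ne hij]
      have h1 : ((Matrix.charmatrix Λ).map (Polynomial.evalRingHom z)).det = 0 := by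
        rw [← RingHom.mapMatrix_apply, ← RingHom.map_det]
        exact hz
      rwa [hmap] at h1
    obtain ⟨v, hv0, hv⟩ := (Matrix.exists_mulVec_eq_zero_iff).mpr hdet
    have heig : Λ *ᵥ v = z • v := by
      rw [Matrix.sub_mulVec, Matrix.smul_mulVec, Matrix.one_mulVec, sub_eq_zero] at hv
      exact hv.symm
    have hpow : ∀ n : ℕ, (Λ ^ n) *ᵥ v = z ^ n • v := by
      intro n
      induction n with
      | zero => simp
      | succ n ih =>
        rw [pow_succ, ← Matrix.mulVec_mulVec, heig, Matrix.mulVec_smul, ih, smul_smul,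
          ← pow_succ']
    have hq : ∀ q : Polynomial ℂ, (Polynomial.aeval Λ q) *ᵥ v = q.eval z • v := by
      intro q
      induction q using Polynomial.induction_on' with
      | add f g hf hg =>
        rw [map_add, Matrix.add_mulVec, hf, hg, Polynomial.eval_add, add_smul]
      | monomial n a =>
        rw [Polynomial.aeval_monomial, ← Algebra.smul_def, Matrix.smul_mulVec, hpow,
          Polynomial.eval_monomial, smul_smul]
    have := hq p
    rw [haeval, Matrix.zero_mulVec] at this
    have h2 := this.symm
    rcases smul_eq_zero.mp h2 with h | h
    · exact h
    · exact absurd h hv0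
    -- `charpoly ∣ p ^ k` in `ℂ[X]`
  have hp_ne : p ≠ 0 := hp_monic.ne_zero
  have hnatq : Λ.charpoly.natDegree = k := by
    rw [Matrix.charpoly_natDegree_eq_dim, Fintype.card_fin]
  have hle : Λ.charpoly.roots ≤ (p ^ k).roots := by
    rw [Polynomial.roots_pow, Multiset.le_iff_count]
    intro a
    rw [Multiset.count_nsmul]
    by_cases ha : a ∈ Λ.charpoly.roots
    · have haq : p.IsRoot a := hroot_imp a (Polynomial.isRoot_of_mem_roots ha)
      have h1 : 1 ≤ Multiset.count a p.roots := by
        rw [Polynomial.count_roots]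
        exact (Polynomial.rootMultiplicity_pos hp_ne).mpr haq
      calc Multiset.count a Λ.charpoly.roots ≤ Multiset.card Λ.charpoly.roots :=
            Multiset.count_le_card _ _
        _ ≤ Λ.charpoly.natDegree := Polynomial.card_roots' _
        _ = k := hnatq
        _ = k * 1 := (mul_one k).symm
        _ ≤ k * Multiset.count a p.roots := Nat.mul_le_mul_left k h1
    · simp [Multiset.count_eq_zero_of_notMem ha]
  have hdvd : Λ.charpoly ∣ p ^ k := by
    calc Λ.charpoly = (Λ.charpoly.roots.map fun a => Polynomial.X - Polynomial.C a).prod :=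
          (IsAlgClosed.splits _).eq_prod_roots_of_monic (Matrix.charpoly_monic Λ)
      _ ∣ ((p ^ k).roots.map fun a => Polynomial.X - Polynomial.C a).prod :=
          Multiset.prod_dvd_prod_of_le (Multiset.map_le_map hle)
      _ = p ^ k :=
          ((IsAlgClosed.splits _).eq_prod_roots_of_monic (hp_monic.pow k)).symm
  -- descend to the subfield `K` of fractions of `R`
  set K : Subfield ℂ := R.fracSubfield with hKdef
  have hFK : ∀ z : ℂ, z ∈ K → z ∈ F := by
    rw [hF]
    rintro z ⟨a, ha, b, hb, hb0, rfl⟩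
    exact ⟨a, ha, b, hb, hb0, rfl⟩
  have hRK : ∀ r : ℂ, r ∈ R → r ∈ K := fun r hr => R.mem_fracSubfield_of_mem hr
  have hp_lifts : p ∈ Polynomial.lifts (algebraMap K ℂ) := by
    rw [Polynomial.lifts_iff_coeff_lifts]
    exact fun n => ⟨⟨p.coeff n, hRK _ (hp_coeffR n)⟩, rfl⟩
  obtain ⟨P, hPmap, hPdeg, hPmonic⟩ :=
    Polynomial.lifts_and_degree_eq_and_monic hp_lifts hp_monic
  have hΛmem : ∀ i j, Λ i j ∈ R := by
    intro i j
    show E.apply0 α i j ∈ R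
    unfold PreEmbedding.apply0
    rw [Matrix.reindex_apply, Matrix.submatrix_apply]
    exact E.mem_R Unit _ (fun _ _ => hαS) _ _
  have hq_coeffR : ∀ m, Λ.charpoly.coeff m ∈ R := by
    intro m
    have hmapΛ : (Matrix.of fun i j => (⟨Λ i j, hΛmem i j⟩ : R) :
        Matrix (Fin k) (Fin k) R).map R.subtype = Λ := by
      ext i j
      rfl
    rw [← hmapΛ, Matrix.charpoly_map, Polynomial.coeff_map]
    exact SetLike.coe_mem _
  have hq_lifts : Λ.charpoly ∈ Polynomial.lifts (algebraMap K ℂ) := by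
    rw [Polynomial.lifts_iff_coeff_lifts]
    exact fun n => ⟨⟨_, hRK _ (hq_coeffR n)⟩, rfl⟩
  obtain ⟨Q, hQmap, hQdeg, hQmonic⟩ :=
    Polynomial.lifts_and_degree_eq_and_monic hq_lifts (Matrix.charpoly_monic Λ)
  have hPaeval : (Polynomial.aeval α) P = 0 := by
    rw [Polynomial.aeval_def, ← Polynomial.eval_map, hPmap]
    exact hp_root
  have hint : IsIntegral K α := ⟨P, hPmonic, hPaeval⟩
  have hmdvd : minpoly K α ∣ P := minpoly.dvd K α hPaeval
  have hdeg2 : P.degree ≤ (minpoly K α).degree := by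
    have hcoeffs : ∀ m, ((minpoly K α).map (algebraMap K ℂ)).coeff m ∈ F := by
      intro m
      rw [Polynomial.coeff_map]
      exact hFK _ (SetLike.coe_mem _)
    have hne : (minpoly K α).map (algebraMap K ℂ) ≠ 0 :=
      Polynomial.map_ne_zero (minpoly.ne_zero hint)
    have heval : ((minpoly K α).map (algebraMap K ℂ)).eval α = 0 := by
      rw [Polynomial.eval_map, ← Polynomial.aeval_def, minpoly.aeval]
    have h := hp_min _ hcoeffs hne heval
    rwa [Polynomial.degree_map, ← hPdeg] at h
  have hPeq : P = minpoly K α :=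
    Polynomial.eq_of_monic_of_dvd_of_natDegree_le (minpoly.monic hint) hPmonic hmdvd
      (Polynomial.natDegree_le_natDegree hdeg2)
  have hPirr : Irreducible P := hPeq ▸ minpoly.irreducible hint
  have hPprime : Prime P := UniqueFactorizationMonoid.irreducible_iff_prime.mp hPirr
  have hQdvd : Q ∣ P ^ k := by
    rw [← Polynomial.map_dvd_map (algebraMap K ℂ) (algebraMap K ℂ).injective hQmonic,
      hQmap, Polynomial.map_pow, hPmap]
    exact hdvd
  obtain ⟨c, hck, hassoc⟩ := (dvd_prime_pow hPprime k).mp hQdvd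
  have hQP : Q = P ^ c :=
    Polynomial.eq_of_monic_of_associated hQmonic (hPmonic.pow c) hassoc
  have hfinal : Λ.charpoly = p ^ c := by
    rw [← hQmap, hQP, Polynomial.map_pow, hPmap]
  refine ⟨c, ?_, hfinal⟩
  rcases Nat.eq_zero_or_pos c with hc0 | hc
  · exfalso
    rw [hc0, pow_zero] at hfinal
    rw [hfinal, Polynomial.natDegree_one] at hnatq
    omega
  · exact hc
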